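/- Let $E$ be an $m$-dimensional subspace of $L_r(\mu, X)$ for a probability measure $\mu$, a Banach space $X$, and $1 \le r < \infty$. Fix a normalized Auerbach basis $(e_i)_{i=1}^m$ of $E$ and define $\phi(t) = m^{-1}\sum_{i=1}^m \|e_i(t)\|_X^r$. Then $d\nu = \phi\, d\mu$ is a probability measure, the map $S : E \to L_r(\nu, X)$ given by $S(e) = \phi^{-1/r} e$ (with convention $0/0 = 0$) is a well-defined linear isometry, and for every $e \in E$ one has $\|Se\|_{L_\infty(\nu, X)} \le m \|e\|_{L_r(\mu, X)}$. -/

import Mathlib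

open MeasureTheory
open scoped ENNReal

/-- Change of density for a finite-dimensional subspace of `L_r(μ, X)`:
given a normalized Auerbach basis `(e_i)_{i=1}^m` of the subspace, set
`φ(t) = m⁻¹ ∑ ‖e_i(t)‖^r` and `dν = φ dμ`.  Then `ν` is a probability measure,
`S(e) = φ^{-1/r} e` is an isometry from the subspace into `L_r(ν, X)`, and
`‖Se‖_{L_∞(ν,X)} ≤ m ‖e‖_{L_r(μ,X)}`. -/
theorem change_of_density {Ω : Type*} [MeasurableSpace Ω] (μ : Measure Ω)
    [IsProbabilityMeasure μ] {X : Type*} [NormedAddCommGroup X] [NormedSpace ℝ X]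
    [CompleteSpace X] (r : ℝ) (hr : 1 ≤ r) (m : ℕ) (hm : 0 < m)
    (e : Fin m → Ω → X) (hmeas : ∀ i, MemLp (e i) (ENNReal.ofReal r) μ)
    (hnorm : ∀ i, eLpNorm (e i) (ENNReal.ofReal r) μ = 1)
    (hauerbach : ∀ α : Fin m → ℝ,
      eLpNorm (fun t => ∑ i, α i • e i t) (ENNReal.ofReal r) μ ≤ 1 →
        ∀ i, |α i| ≤ 1)
    (φ : Ω → ℝ) (hφ : ∀ t, φ t = (m : ℝ)⁻¹ * ∑ i, ‖e i t‖ ^ r)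
    (ν : Measure Ω) (hν : ν = μ.withDensity fun t => ENNReal.ofReal (φ t)) :
    IsProbabilityMeasure ν ∧
    (∀ α : Fin m → ℝ,
      eLpNorm (fun t => φ t ^ (-(1 : ℝ) / r) • ∑ i, α i • e i t)
          (ENNReal.ofReal r) ν
        = eLpNorm (fun t => ∑ i, α i • e i t) (ENNReal.ofReal r) μ) ∧
    (∀ α : Fin m → ℝ,
      eLpNorm (fun t => φ t ^ (-(1 : ℝ) / r) • ∑ i, α i • e i t) ⊤ ν
        ≤ (m : ℝ≥0∞) *
            eLpNorm (fun t => ∑ i, α i • e i t) (ENNReal.ofReal r) μ) := by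
  have hr0 : (0:ℝ) < r := lt_of_lt_of_le one_pos hr
  have hrne : r ≠ 0 := hr0.ne'
  set p := ENNReal.ofReal r with hp
  have hptr : p.toReal = r := ENNReal.toReal_ofReal hr0.le
  have hp0 : p ≠ 0 := by simp [hp, ENNReal.ofReal_eq_zero, not_le, hr0]
  have hptop : p ≠ ⊤ := ENNReal.ofReal_ne_top
  have hφ_nonneg : ∀ t, 0 ≤ φ t := fun t => by
    rw [hφ]
    have : ∀ i ∈ Finset.univ, (0:ℝ) ≤ ‖e i t‖ ^ r := fun i _ =>
      Real.rpow_nonneg (norm_nonneg _) r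
    positivity
  -- where φ vanishes, all e i vanish
  have hφzero : ∀ t, φ t = 0 → ∀ i, e i t = 0 := by
    intro t ht i
    rw [hφ] at ht
    have hsum0 : ∑ j, ‖e j t‖ ^ r = 0 := by
      have hm' : ((m:ℝ)⁻¹) ≠ 0 := by positivity
      exact (mul_eq_zero.1 ht).resolve_left hm'
    have h0 : ‖e i t‖ ^ r = 0 :=
      (Finset.sum_eq_zero_iff_of_nonneg (fun j _ =>
        Real.rpow_nonneg (norm_nonneg _) r)).1 hsum0 i (Finset.mem_univ i)
    have : ‖e i t‖ = 0 := (Real.rpow_eq_zero (norm_nonneg _) hrne).1 h0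
    simpa using this
  -- measurability of φ
  have hφeq : φ = fun t => (m : ℝ)⁻¹ * ∑ i, ‖e i t‖ ^ r := funext hφ
  have hφmeas : AEMeasurable φ μ := by
    rw [hφeq]
    exact (aemeasurable_const.mul (Finset.aemeasurable_fun_sum _ (fun i _ =>
      ((hmeas i).1.norm.aemeasurable.pow aemeasurable_const))))
  have hφmeas' : AEMeasurable (fun t => ENNReal.ofReal (φ t)) μ :=
    hφmeas.ennreal_ofReal
  -- integral of each ‖e i‖^r is 1
  have hInt : ∀ i, ∫⁻ t, ENNReal.ofReal (‖e i t‖ ^ r) ∂μ = 1 := by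
    intro i
    have h := hnorm i
    rw [eLpNorm_eq_lintegral_rpow_enorm_toReal hp0 hptop, hptr] at h; simp only [enorm_eq_nnnorm] at h
    have h2 : ((∫⁻ t, (‖e i t‖₊ : ℝ≥0∞) ^ r ∂μ) ^ (1/r)) ^ r = 1 := by
      rw [h]; simp
    rw [← ENNReal.rpow_mul, one_div, inv_mul_cancel₀ hrne, ENNReal.rpow_one] at h2
    calc ∫⁻ t, ENNReal.ofReal (‖e i t‖ ^ r) ∂μ
        = ∫⁻ t, (‖e i t‖₊ : ℝ≥0∞) ^ r ∂μ := by
          congr 1; funext t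
          rw [← ENNReal.ofReal_rpow_of_nonneg (norm_nonneg _) hr0.le,
            ofReal_norm, enorm_eq_nnnorm]
      _ = 1 := h2
  -- Part 1 : ν is a probability measure
  have hprob : IsProbabilityMeasure ν := by
    constructor
    rw [hν, withDensity_apply _ MeasurableSet.univ, Measure.restrict_univ]
    have : ∀ t, ENNReal.ofReal (φ t)
        = ((m:ℝ≥0∞))⁻¹ * ∑ i, ENNReal.ofReal (‖e i t‖ ^ r) := by
      intro t
      rw [hφ, ENNReal.ofReal_mul (by positivity),
        ENNReal.ofReal_sum_of_nonneg (fun i _ => Real.rpow_nonneg (norm_nonneg _) r),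
        ENNReal.ofReal_inv_of_pos (by exact_mod_cast hm), ENNReal.ofReal_natCast]
    simp_rw [this]
    rw [lintegral_const_mul' _ _ (by simp [hm.ne']),
      lintegral_finset_sum' _ (fun i _ => (hmeas i).1.norm.aemeasurable.pow
        aemeasurable_const |>.ennreal_ofReal)]
    simp_rw [hInt]
    simp only [Finset.sum_const, Finset.card_univ, Fintype.card_fin, nsmul_eq_mul,
      mul_one]
    exact ENNReal.inv_mul_cancel (by exact_mod_cast hm.ne') (by simp)
  -- common facts about g = ∑ αᵢ eᵢ
  have hgmem : ∀ α : Fin m → ℝ, MemLp (fun t => ∑ i, α i • e i t) p μ := by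
    intro α
    have h := memLp_finset_sum' Finset.univ (fun i (_ : i ∈ Finset.univ) =>
      (hmeas i).const_smul (α i))
    have heq : (∑ i, α i • e i) = fun t => ∑ i, α i • e i t := by
      funext t; simp
    rwa [heq] at h
  have hg0 : ∀ (α : Fin m → ℝ) t, φ t = 0 → ∑ i, α i • e i t = 0 := by
    intro α t ht
    exact Finset.sum_eq_zero (fun i _ => by rw [hφzero t ht i, smul_zero])
  have hSmeas : ∀ α : Fin m → ℝ,
      AEStronglyMeasurable (fun t => φ t ^ (-(1:ℝ)/r) • ∑ i, α i • e i t) μ :=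
    fun α => ((hφmeas.pow aemeasurable_const).aestronglyMeasurable).smul (hgmem α).1
  -- pointwise identity for the isometry
  have hkey : ∀ (α : Fin m → ℝ) t,
      ENNReal.ofReal (φ t) * (‖φ t ^ (-(1:ℝ)/r) • ∑ i, α i • e i t‖₊ : ℝ≥0∞) ^ r
        = (‖∑ i, α i • e i t‖₊ : ℝ≥0∞) ^ r := by
    intro α t
    rcases eq_or_lt_of_le (hφ_nonneg t) with h0 | hpos
    · rw [← h0, hg0 α t h0.symm]
      simp [ENNReal.zero_rpow_of_pos hr0]
    · have hc : (0:ℝ) ≤ φ t ^ (-(1:ℝ)/r) := Real.rpow_nonneg hpos.le _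
      rw [← enorm_eq_nnnorm, ← enorm_eq_nnnorm, ← ofReal_norm, ← ofReal_norm,
        ENNReal.ofReal_rpow_of_nonneg (norm_nonneg _) hr0.le,
        ENNReal.ofReal_rpow_of_nonneg (norm_nonneg _) hr0.le,
        ← ENNReal.ofReal_mul (hφ_nonneg t)]
      congr 1
      rw [norm_smul, Real.norm_eq_abs, abs_of_nonneg hc,
        Real.mul_rpow hc (norm_nonneg _), ← Real.rpow_mul hpos.le,
        div_mul_cancel₀ _ hrne, ← mul_assoc, Real.rpow_neg_one,
        mul_inv_cancel₀ hpos.ne', one_mul]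
  refine ⟨hprob, fun α => ?_, fun α => ?_⟩
  -- Part 2 : isometry
  · rw [eLpNorm_eq_lintegral_rpow_enorm_toReal hp0 hptop,
      eLpNorm_eq_lintegral_rpow_enorm_toReal hp0 hptop, hptr]
    congr 1
    rw [hν, lintegral_withDensity_eq_lintegral_mul₀ hφmeas'
      (((hSmeas α).enorm).pow aemeasurable_const)]
    exact lintegral_congr (fun t => hkey α t)
  -- Part 3 : L∞ bound
  · set g : Ω → X := fun t => ∑ i, α i • e i t with hgdef
    have hgfin : eLpNorm g p μ ≠ ⊤ := (hgmem α).2.ne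
    set B : ℝ := (eLpNorm g p μ).toReal with hB
    have hBnn : (0:ℝ) ≤ B := ENNReal.toReal_nonneg
    have hBeq : eLpNorm g p μ = ENNReal.ofReal B := (ENNReal.ofReal_toReal hgfin).symm
    -- coefficients are bounded by B thanks to the Auerbach property
    have hα : ∀ i, |α i| ≤ B := by
      intro i
      by_cases hB0 : eLpNorm g p μ = 0
      · have hzero : ∀ c : ℝ, eLpNorm (fun t => ∑ j, (c * α j) • e j t) p μ = 0 := by
          intro c
          have hfe : (fun t => ∑ j, (c * α j) • e j t) = c • g := by
            funext t; simp [hgdef, Finset.smul_sum, mul_smul]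
          rw [hfe, eLpNorm_const_smul, hB0, mul_zero]
        have hc1 : ∀ c : ℝ, |c * α i| ≤ 1 := fun c =>
          hauerbach _ (by rw [hzero c]; exact zero_le_one) i
        have hai : α i = 0 := by
          by_contra h
          have h2 := hc1 (2 / |α i|)
          rw [abs_mul, abs_div, abs_two, abs_abs,
            div_mul_cancel₀ _ (abs_ne_zero.2 h)] at h2
          linarith
        simp [hai, hBnn]
      · have hBpos : 0 < B := ENNReal.toReal_pos hB0 hgfin
        have h1 : eLpNorm (fun t => ∑ j, (α j / B) • e j t) p μ ≤ 1 := by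
          have heq2 : (fun t => ∑ j, (α j / B) • e j t) = B⁻¹ • g := by
            funext t; simp [hgdef, Finset.smul_sum, mul_smul, div_eq_inv_mul]
          rw [heq2, eLpNorm_const_smul, hBeq,
            ← ofReal_norm, Real.norm_eq_abs,
            abs_of_nonneg (inv_nonneg.2 hBpos.le),
            ← ENNReal.ofReal_mul (inv_nonneg.2 hBpos.le),
            inv_mul_cancel₀ hBpos.ne', ENNReal.ofReal_one]
        have h3 := hauerbach _ h1 i
        rwa [abs_div, abs_of_nonneg hBpos.le, div_le_one hBpos] at h3
    -- power mean inequality : ∑ ‖e i t‖ ≤ m * φ t ^ (1/r)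
    have hsum : ∀ t, ∑ i, ‖e i t‖ ≤ (m:ℝ) * φ t ^ (1/r) := by
      intro t
      have hw' : ∑ _i : Fin m, (m:ℝ)⁻¹ = 1 := by
        rw [Finset.sum_const, Finset.card_univ, Fintype.card_fin, nsmul_eq_mul,
          mul_inv_cancel₀ (by exact_mod_cast hm.ne')]
      have hpm := Real.rpow_arith_mean_le_arith_mean_rpow Finset.univ
        (fun _ => (m:ℝ)⁻¹) (fun i => ‖e i t‖) (fun _ _ => by positivity) hw'
        (fun i _ => norm_nonneg _) hr
      rw [← Finset.mul_sum, ← Finset.mul_sum, ← hφ t] at hpm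
      have hS : (0:ℝ) ≤ (m:ℝ)⁻¹ * ∑ i, ‖e i t‖ := by positivity
      have h2 : (m:ℝ)⁻¹ * ∑ i, ‖e i t‖ ≤ φ t ^ (1/r) :=
        calc (m:ℝ)⁻¹ * ∑ i, ‖e i t‖
            = (((m:ℝ)⁻¹ * ∑ i, ‖e i t‖) ^ r) ^ (1/r) := by
              rw [← Real.rpow_mul hS, mul_one_div_cancel hrne, Real.rpow_one]
          _ ≤ (φ t) ^ (1/r) :=
              Real.rpow_le_rpow (Real.rpow_nonneg hS r) hpm (by positivity)
      calc ∑ i, ‖e i t‖ = (m:ℝ) * ((m:ℝ)⁻¹ * ∑ i, ‖e i t‖) := by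
            rw [← mul_assoc, mul_inv_cancel₀ (by exact_mod_cast hm.ne'), one_mul]
        _ ≤ (m:ℝ) * φ t ^ (1/r) :=
            mul_le_mul_of_nonneg_left h2 (by positivity)
    -- pointwise bound on the transformed function
    have hbound : ∀ t, ‖φ t ^ (-(1:ℝ)/r) • g t‖ ≤ (m:ℝ) * B := by
      intro t
      rcases eq_or_lt_of_le (hφ_nonneg t) with h0 | hpos
      · rw [show g t = 0 from hg0 α t h0.symm, smul_zero, norm_zero]
        positivity
      · have hgle : ‖g t‖ ≤ B * ∑ i, ‖e i t‖ := by
          calc ‖g t‖ ≤ ∑ i, ‖α i • e i t‖ := norm_sum_le _ _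
            _ = ∑ i, |α i| * ‖e i t‖ := by
                simp [norm_smul, Real.norm_eq_abs]
            _ ≤ ∑ i, B * ‖e i t‖ :=
                Finset.sum_le_sum (fun i _ =>
                  mul_le_mul_of_nonneg_right (hα i) (norm_nonneg _))
            _ = B * ∑ i, ‖e i t‖ := by rw [Finset.mul_sum]
        have hns : ‖φ t ^ (-(1:ℝ)/r) • g t‖ = φ t ^ (-(1:ℝ)/r) * ‖g t‖ := by
          rw [norm_smul, Real.norm_eq_abs, abs_of_nonneg (Real.rpow_nonneg hpos.le _)]
        rw [hns]
        calc φ t ^ (-(1:ℝ)/r) * ‖g t‖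
            ≤ φ t ^ (-(1:ℝ)/r) * (B * ((m:ℝ) * φ t ^ (1/r))) := by
              refine mul_le_mul_of_nonneg_left ?_ (Real.rpow_nonneg hpos.le _)
              exact hgle.trans (mul_le_mul_of_nonneg_left (hsum t) hBnn)
          _ = (m:ℝ) * B * (φ t ^ (-(1:ℝ)/r) * φ t ^ (1/r)) := by ring
          _ = (m:ℝ) * B := by
              rw [← Real.rpow_add hpos, neg_div, neg_add_cancel, Real.rpow_zero,
                mul_one]
    rw [eLpNorm_exponent_top]
    refine le_trans (eLpNormEssSup_le_of_ae_bound (C := (m:ℝ) * B)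
      (Filter.Eventually.of_forall hbound)) ?_
    rw [ENNReal.ofReal_mul (by positivity), ENNReal.ofReal_natCast, ← hBeq]
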